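/- For nonnegative integers n, k, m with n ≤ 2^k, D(2^(k+m) + n − 1) = 2^k·(2^m − 1) − m·n + D(2^k + n − 1). -/

import Mathlib

/-- f m = (#1 digits) - (#0 digits) in the binary expansion of m. -/
def f (m : ℕ) : ℤ :=
  2 * ((Nat.digits 2 m).count 1 : ℤ) - ((Nat.digits 2 m).length : ℤ)

/-- Cumulated deficient binary digit sum (OEIS A268289), D 0 = 0. -/
def D (n : ℕ) : ℤ := ∑ m ∈ Finset.Icc 1 n, f m

lemma D_zero : D 0 = 0 := by simp [D]

lemma D_succ (n : ℕ) : D (n + 1) = D n + f (n + 1) := by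
  unfold D
  rw [Finset.sum_Icc_succ_top (by omega)]

lemma f_one : f 1 = 1 := by norm_num [f]

lemma f_two : f 2 = 0 := by norm_num [f]

lemma D_one : D 1 = 1 := by
  rw [show (1:ℕ) = 0 + 1 from rfl, D_succ, D_zero, f_one]; ring

lemma D_two : D 2 = 1 := by
  rw [show (2:ℕ) = 1 + 1 from rfl, D_succ, D_one, f_two]; ring

lemma f_even (j : ℕ) (hj : 0 < j) : f (2 * j) = f j - 1 := by
  unfold f
  rw [Nat.digits_def' (by norm_num : (1:ℕ) < 2) (by omega)]
  rw [Nat.mul_mod_right, Nat.mul_div_cancel_left _ (by norm_num)]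
  simp [List.count_cons]
  push_cast
  ring

lemma f_odd (j : ℕ) : f (2 * j + 1) = f j + 1 := by
  unfold f
  rw [Nat.digits_def' (by norm_num : (1:ℕ) < 2) (by omega)]
  rw [Nat.mul_add_mod, Nat.mul_add_div (by norm_num)]
  norm_num [List.count_cons]
  push_cast
  ring

lemma D_odd (m : ℕ) : D (2 * m + 1) = 2 * D m + 1 := by
  induction m with
  | zero => norm_num [D_one, D_zero]
  | succ m ih =>
      have e : 2 * (m + 1) + 1 = (2 * m + 1) + 1 + 1 := by ring
      rw [e, D_succ, D_succ, ih, show (2*m+1)+1 = 2*(m+1) from by ring, f_even _ (by omega),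
        show 2*(m+1)+1 = 2*(m+1)+1 from rfl, f_odd, D_succ]
      ring

lemma D_even (m : ℕ) (hm : 0 < m) : D (2 * m) = 2 * D m - f m := by
  have h1 : D (2 * m + 1) = D (2 * m) + f (2 * m + 1) := D_succ _
  have h2 : D (2 * m + 1) = 2 * D m + 1 := D_odd m
  rw [f_odd] at h1
  omega

lemma f_shift (A : ℕ) : ∀ t < 2 ^ A, f (2 ^ (A + 1) + t) = f (2 ^ A + t) - 1 := by
  induction A with
  | zero =>
      intro t ht
      interval_cases t
      norm_num [f_one, f_two]
  | succ A ih =>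
      intro t ht
      rcases Nat.even_or_odd t with ⟨u, rfl⟩ | ⟨u, rfl⟩
      · have hu : u < 2 ^ A := by
          have : 2 ^ (A + 1) = 2 * 2 ^ A := by ring
          omega
        have e1 : 2 ^ (A + 1 + 1) + (u + u) = 2 * (2 ^ (A + 1) + u) := by ring
        have e2 : 2 ^ (A + 1) + (u + u) = 2 * (2 ^ A + u) := by ring
        rw [e1, e2, f_even _ (by positivity), f_even _ (by positivity), ih u hu]
      · have hu : u < 2 ^ A := by
          have : 2 ^ (A + 1) = 2 * 2 ^ A := by ring
          omega
        have e1 : 2 ^ (A + 1 + 1) + (2 * u + 1) = 2 * (2 ^ (A + 1) + u) + 1 := by ring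
        have e2 : 2 ^ (A + 1) + (2 * u + 1) = 2 * (2 ^ A + u) + 1 := by ring
        rw [e1, e2, f_odd, f_odd, ih u hu]
        ring

lemma key (K : ℕ) : ∀ n ≤ 2 ^ K,
    D (2 ^ (K + 1) + n - 1) = (2 ^ K : ℤ) - n + D (2 ^ K + n - 1) := by
  induction K with
  | zero =>
      intro n hn
      interval_cases n <;> norm_num [D_zero, D_one, D_two]
  | succ K ih =>
      intro n hn
      have hp : (1:ℕ) ≤ 2 ^ K := Nat.one_le_two_pow
      have hp1 : (1:ℕ) ≤ 2 ^ (K + 1) := Nat.one_le_two_pow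
      have h2 : 2 ^ (K + 1) = 2 * 2 ^ K := by ring
      rcases Nat.even_or_odd n with ⟨u, rfl⟩ | ⟨u, rfl⟩
      · have hu : u ≤ 2 ^ K := by omega
        have e1 : 2 ^ (K + 1 + 1) + (u + u) - 1 = 2 * (2 ^ (K + 1) + u - 1) + 1 := by
          have : 2 ^ (K + 1 + 1) = 2 * 2 ^ (K + 1) := by ring
          omega
        have e2 : 2 ^ (K + 1) + (u + u) - 1 = 2 * (2 ^ K + u - 1) + 1 := by omega
        rw [e1, e2, D_odd, D_odd, ih u hu]
        push_cast
        ring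
      · have hu : u < 2 ^ K := by omega
        have e1 : 2 ^ (K + 1 + 1) + (2 * u + 1) - 1 = 2 * (2 ^ (K + 1) + u) := by
          have : 2 ^ (K + 1 + 1) = 2 * 2 ^ (K + 1) := by ring
          omega
        have e2 : 2 ^ (K + 1) + (2 * u + 1) - 1 = 2 * (2 ^ K + u) := by omega
        have hih := ih (u + 1) (by omega)
        rw [show 2 ^ (K + 1) + (u + 1) - 1 = 2 ^ (K + 1) + u from by omega,
            show 2 ^ K + (u + 1) - 1 = 2 ^ K + u from by omega] at hih
        rw [e1, e2, D_even _ (by positivity), D_even _ (by positivity), hih,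
            f_shift K u hu]
        push_cast
        ring

theorem stmt_17 (n k m : ℕ) (h : n ≤ 2 ^ k) :
    D (2 ^ (k + m) + n - 1) = 2 ^ k * (2 ^ m - 1 : ℤ) - m * n + D (2 ^ k + n - 1) := by
  induction m with
  | zero => simp
  | succ m ih =>
      have hn : n ≤ 2 ^ (k + m) :=
        h.trans (Nat.pow_le_pow_right (by norm_num) (by omega))
      have hk := key (k + m) n hn
      rw [show k + (m + 1) = (k + m) + 1 from by ring, hk, ih]
      push_cast
      ring
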